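/- Let σ₁ and σ₂ be commuting non-identity two-qubit Pauli operators that are not equal up to phase, and set σ₃ = σ₁σ₂. For each binary string x = (x₁, x₂, x₃) ∈ {0,1}³ define P_x = (1/4)(1 + (−1)^{x₁} σ₁ + (−1)^{x₂} σ₂ + (−1)^{x₃} σ₃), where 1 is the 4×4 identity. If A ⊆ {0,1}³ has |A| = 4 and Tr(P_x P_y) = 0 for all distinct x, y ∈ A, then for each coordinate j ∈ {1, 2, 3} exactly two of the four strings in A have x_j = 1; equivalently, any two distinct strings in A have Hamming distance exactly 2. -/
import Mathlib


open Matrix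

noncomputable section

/-- Matrices on the Hilbert space of `n` qubits, with rows and columns indexed by
bit strings `Fin n → Fin 2`. -/
abbrev QMat (n : ℕ) := Matrix (Fin n → Fin 2) (Fin n → Fin 2) ℂ

/-- The single-qubit identity. -/
def pI : Matrix (Fin 2) (Fin 2) ℂ := 1

/-- The single-qubit Pauli X. -/
def pX : Matrix (Fin 2) (Fin 2) ℂ := !![0, 1; 1, 0]

/-- The single-qubit Pauli Y. -/
def pY : Matrix (Fin 2) (Fin 2) ℂ := !![0, -Complex.I; Complex.I, 0]

/-- The single-qubit Pauli Z. -/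
def pZ : Matrix (Fin 2) (Fin 2) ℂ := !![1, 0; 0, -1]

/-- The `n`-fold Kronecker product `W 0 ⊗ ⋯ ⊗ W (n-1)`, realized on indices
`Fin n → Fin 2`. -/
def kron (n : ℕ) (W : Fin n → Matrix (Fin 2) (Fin 2) ℂ) : QMat n :=
  fun v w => ∏ j, W j (v j) (w j)

/-- `M` is an `n`-qubit Pauli operator: an `n`-fold Kronecker product of matrices
from `{I₂, X, Y, Z}`. -/
def IsPauliOp (n : ℕ) (M : QMat n) : Prop :=
  ∃ W : Fin n → Matrix (Fin 2) (Fin 2) ℂ,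
    (∀ j, W j = pI ∨ W j = pX ∨ W j = pY ∨ W j = pZ) ∧ M = kron n W

/-- Two matrices are equal up to phase if one is a nonzero scalar multiple of the other. -/
def PhaseEq {m : Type*} (A B : Matrix m m ℂ) : Prop := ∃ c : ℂ, c ≠ 0 ∧ A = c • B

/-- A maximal commuting Pauli class in dimension `d = 2 ^ n`: a set of `d - 1`
pairwise commuting non-identity `n`-qubit Pauli operators, pairwise distinct up to phase. -/
def IsMaxClass (n : ℕ) (C : Set (QMat n)) : Prop :=
  C.Finite ∧ C.ncard = 2 ^ n - 1 ∧
  (∀ U ∈ C, IsPauliOp n U ∧ U ≠ 1) ∧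
  (∀ U ∈ C, ∀ V ∈ C, U * V = V * U) ∧
  (∀ U ∈ C, ∀ V ∈ C, U ≠ V → ¬ PhaseEq U V)

/-- Two classes are disjoint if no member of one is equal up to phase to a member of the other. -/
def ClassDisjoint {n : ℕ} (C D : Set (QMat n)) : Prop :=
  ∀ U ∈ C, ∀ V ∈ D, ¬ PhaseEq U V

/-- Two classes are equal up to phase (as sets of operators). -/
def ClassPhaseEq {n : ℕ} (C D : Set (QMat n)) : Prop :=
  (∀ U ∈ C, ∃ V ∈ D, PhaseEq U V) ∧ (∀ V ∈ D, ∃ U ∈ C, PhaseEq U V)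

/-- The standard Hermitian inner product on `ι → ℂ` (conjugate-linear in the first slot). -/
def cinner {ι : Type*} [Fintype ι] (x y : ι → ℂ) : ℂ :=
  ∑ k, (starRingEnd ℂ) (x k) * y k

lemma kron_mul (n : ℕ) (W V : Fin n → Matrix (Fin 2) (Fin 2) ℂ) :
    kron n W * kron n V = kron n (fun j => W j * V j) := by
  ext v w
  simp only [kron, Matrix.mul_apply, ← Finset.prod_mul_distrib]
  rw [Finset.prod_univ_sum, ← Fintype.piFinset_univ]

lemma kron_one (n : ℕ) : kron n (fun _ => (1 : Matrix (Fin 2) (Fin 2) ℂ)) = 1 := by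
  ext v w
  simp only [kron, Matrix.one_apply, Finset.prod_boole]
  simp [funext_iff]

lemma trace_kron (n : ℕ) (W : Fin n → Matrix (Fin 2) (Fin 2) ℂ) :
    (kron n W).trace = ∏ j, (W j).trace := by
  simp only [Matrix.trace, Matrix.diag, kron]
  rw [Finset.prod_univ_sum, ← Fintype.piFinset_univ]

lemma pauli_mul_self (P : Matrix (Fin 2) (Fin 2) ℂ)
    (hP : P = pI ∨ P = pX ∨ P = pY ∨ P = pZ) : P * P = 1 := by
  rcases hP with rfl|rfl|rfl|rfl <;>
    simp [pI, pX, pY, pZ] <;>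
    ext i j <;> fin_cases i <;> fin_cases j <;>
    simp [Matrix.mul_apply, Fin.sum_univ_two, Matrix.one_apply, Complex.I_mul_I]

lemma pauli_trace_mul_ne (P Q : Matrix (Fin 2) (Fin 2) ℂ)
    (hP : P = pI ∨ P = pX ∨ P = pY ∨ P = pZ)
    (hQ : Q = pI ∨ Q = pX ∨ Q = pY ∨ Q = pZ) (h : P ≠ Q) : (P * Q).trace = 0 := by
  rcases hP with rfl|rfl|rfl|rfl <;> rcases hQ with rfl|rfl|rfl|rfl <;>
    first
    | exact absurd rfl h
    | simp [pI, pX, pY, pZ, Matrix.trace_fin_two, Matrix.mul_apply, Fin.sum_univ_two,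
        Matrix.one_apply]

lemma sign_mul_sign (a b : Fin 2) :
    ((-1 : ℂ)) ^ b.val * (((-1 : ℂ)) ^ a.val * 4) = (if a = b then 1 else -1) * 4 := by
  fin_cases a <;> fin_cases b <;> norm_num

set_option maxRecDepth 10000 in
lemma balanced_of_dist (A : Finset (Fin 3 → Fin 2)) (hA : A.card = 4)
    (h : ∀ x ∈ A, ∀ y ∈ A, x ≠ y → hammingDist x y = 2) :
    ∀ j : Fin 3, (A.filter fun x => x j = 1).card = 2 := by
  revert hA h; revert A; decide


/-- For commuting non-identity two-qubit Pauli operators `σ₁`, `σ₂` not equal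
up to phase, with `σ₃ = σ₁σ₂` and projectors
`P x = (1/4)(1 + (−1)^{x₁} σ₁ + (−1)^{x₂} σ₂ + (−1)^{x₃} σ₃)`, any four binary strings with
pairwise trace-orthogonal projectors have, in each coordinate, exactly two strings with
bit `1`; equivalently, they have pairwise Hamming distance exactly `2`. -/
theorem projector_strings_balanced (σ₁ σ₂ : QMat 2)
    (h1 : IsPauliOp 2 σ₁) (h1' : σ₁ ≠ 1)
    (h2 : IsPauliOp 2 σ₂) (h2' : σ₂ ≠ 1)
    (hcomm : σ₁ * σ₂ = σ₂ * σ₁) (hne : ¬ PhaseEq σ₁ σ₂)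
    (P : (Fin 3 → Fin 2) → QMat 2)
    (hP : ∀ x, P x = (1 / 4 : ℂ) •
      ((1 : QMat 2) + ((-1 : ℂ)) ^ (x 0).val • σ₁ + ((-1 : ℂ)) ^ (x 1).val • σ₂ +
        ((-1 : ℂ)) ^ (x 2).val • (σ₁ * σ₂)))
    (A : Finset (Fin 3 → Fin 2)) (hA : A.card = 4)
    (horth : ∀ x ∈ A, ∀ y ∈ A, x ≠ y → (P x * P y).trace = 0) :
    (∀ j : Fin 3, (A.filter fun x => x j = 1).card = 2) ∧
    (∀ x ∈ A, ∀ y ∈ A, x ≠ y → hammingDist x y = 2) := by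
  obtain ⟨W, hW, hWeq⟩ := h1
  obtain ⟨V, hV, hVeq⟩ := h2
  -- squares are the identity
  have hsq1 : σ₁ * σ₁ = 1 := by
    rw [hWeq, kron_mul,
      show (fun j => W j * W j) = fun _ => (1 : Matrix (Fin 2) (Fin 2) ℂ) from
        funext fun j => pauli_mul_self _ (hW j), kron_one]
  have hsq2 : σ₂ * σ₂ = 1 := by
    rw [hVeq, kron_mul,
      show (fun j => V j * V j) = fun _ => (1 : Matrix (Fin 2) (Fin 2) ℂ) from
        funext fun j => pauli_mul_self _ (hV j), kron_one]
  -- traces vanish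
  have htr1 : σ₁.trace = 0 := by
    have hj : ∃ j, W j ≠ pI := by
      by_contra hc
      push_neg at hc
      exact h1' (by rw [hWeq, show W = fun _ => pI from funext hc]; exact kron_one 2)
    obtain ⟨j, hj⟩ := hj
    rw [hWeq, trace_kron]
    refine Finset.prod_eq_zero (Finset.mem_univ j) ?_
    have := pauli_trace_mul_ne (W j) pI (hW j) (Or.inl rfl) hj
    rwa [show (pI : Matrix (Fin 2) (Fin 2) ℂ) = 1 from rfl, mul_one] at this
  have htr2 : σ₂.trace = 0 := by
    have hj : ∃ j, V j ≠ pI := by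
      by_contra hc
      push_neg at hc
      exact h2' (by rw [hVeq, show V = fun _ => pI from funext hc]; exact kron_one 2)
    obtain ⟨j, hj⟩ := hj
    rw [hVeq, trace_kron]
    refine Finset.prod_eq_zero (Finset.mem_univ j) ?_
    have := pauli_trace_mul_ne (V j) pI (hV j) (Or.inl rfl) hj
    rwa [show (pI : Matrix (Fin 2) (Fin 2) ℂ) = 1 from rfl, mul_one] at this
  have htr12 : (σ₁ * σ₂).trace = 0 := by
    have hj : ∃ j, W j ≠ V j := by
      by_contra hc
      push_neg at hc
      exact hne ⟨1, one_ne_zero, by rw [one_smul, hWeq, hVeq, funext hc]⟩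
    obtain ⟨j, hj⟩ := hj
    rw [hWeq, hVeq, kron_mul, trace_kron]
    exact Finset.prod_eq_zero (Finset.mem_univ j)
      (pauli_trace_mul_ne (W j) (V j) (hW j) (hV j) hj)
  have htrI : (1 : QMat 2).trace = 4 := by
    rw [Matrix.trace_one]; norm_num
  -- product rewrites
  have e1 : σ₁ * (σ₁ * σ₂) = σ₂ := by rw [← mul_assoc, hsq1, one_mul]
  have e2 : σ₁ * σ₂ * σ₁ = σ₂ := by rw [hcomm, mul_assoc, hsq1, mul_one]
  have e3 : σ₂ * (σ₁ * σ₂) = σ₁ := by rw [hcomm, ← mul_assoc, hsq2, one_mul]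
  have e4 : σ₁ * σ₂ * σ₂ = σ₁ := by rw [mul_assoc, hsq2, mul_one]
  have e5 : σ₁ * σ₂ * (σ₁ * σ₂) = 1 := by rw [mul_assoc, e3, hsq1]
  -- the key per-pair equation
  have key : ∀ x ∈ A, ∀ y ∈ A, x ≠ y →
      (1 : ℂ) + (if x 0 = y 0 then 1 else -1) + (if x 1 = y 1 then 1 else -1)
        + (if x 2 = y 2 then 1 else -1) = 0 := by
    intro x hx y hy hxy
    have h0 := horth x hx y hy hxy
    rw [hP x, hP y] at h0
    rw [smul_mul_assoc, mul_smul_comm, smul_smul] at h0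
    simp only [add_mul, mul_add, one_mul, mul_one, smul_mul_assoc, mul_smul_comm,
      smul_smul, hsq1, hsq2, e1, e2, e3, e4, e5, ← hcomm] at h0
    simp only [Matrix.trace_add, Matrix.trace_smul, htr1, htr2, htr12, htrI,
      smul_eq_mul, mul_zero, add_zero, zero_add, smul_zero] at h0
    rw [sign_mul_sign (x 0) (y 0), sign_mul_sign (x 1) (y 1), sign_mul_sign (x 2) (y 2)] at h0
    linear_combination 4 * h0
  have hdist : ∀ x ∈ A, ∀ y ∈ A, x ≠ y → hammingDist x y = 2 := by
    intro x hx y hy hxy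
    have h0 := key x hx y hy hxy
    have hd : hammingDist x y = (if x 0 = y 0 then 0 else 1) + (if x 1 = y 1 then 0 else 1)
        + (if x 2 = y 2 then 0 else 1) := by
      simp only [hammingDist, Finset.card_filter, Fin.sum_univ_three, ite_not]
    rw [hd]
    by_cases c0 : x 0 = y 0 <;> by_cases c1 : x 1 = y 1 <;> by_cases c2 : x 2 = y 2 <;>
      simp [c0, c1, c2] at h0 ⊢ <;> norm_num at h0
  exact ⟨balanced_of_dist A hA hdist, hdist⟩
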